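/- Let G be a chain-connected anterial graph over a finite node set V and let G_col be its collapsed graph over the chain components of G. Then: no pair of distinct chain components is joined in G_col by both a directed and a bidirected edge; G_col contains only directed and bidirected edges (no undirected edges); G_col contains no directed cycle; and there is no bidirected edge of G_col whose two endpoints are joined by a directed path in G_col. In particular, G_col is an ancestral graph. -/

import Mathlib

open MeasureTheory

universe u v w

/-! ## Mixed graphs -/

/-- A mixed graph over a node set `V`: directed, undirected and bidirected edges.
The undirected and bidirected edge relations are read symmetrically. -/
structure MixedGraph (V : Type u) where
  dir : V → V → Prop
  undir : V → V → Prop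
  bidir : V → V → Prop

namespace MixedGraph

variable {V : Type u} (G : MixedGraph V)

/-- The (symmetrised) undirected-edge relation: there is an undirected edge between `a` and `b`. -/
def Undir (a b : V) : Prop := G.undir a b ∨ G.undir b a

/-- The (symmetrised) bidirected-edge relation. -/
def Bidir (a b : V) : Prop := G.bidir a b ∨ G.bidir b a

/-- Two nodes are adjacent if they are joined by an edge of any type. -/
def Adj (a b : V) : Prop := G.dir a b ∨ G.dir b a ∨ G.Undir a b ∨ G.Bidir a b

/-- One step of a semi-directed path: a directed edge `a → b` or an undirected edge. -/
def sdStep (a b : V) : Prop := G.dir a b ∨ G.Undir a b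

/-- There is a semi-directed path (possibly trivial) from `a` to `b`. -/
def SemiDirReach (a b : V) : Prop := Relation.ReflTransGen G.sdStep a b

/-- The anterior of a node set `S`. -/
def ant (S : Set V) : Set V := {x | x ∉ S ∧ ∃ i ∈ S, G.SemiDirReach x i}

/-- There is a semi-directed cycle in `G`. -/
def HasSemiDirCycle : Prop := ∃ a b, G.dir a b ∧ G.SemiDirReach b a

/-- A chain mixed graph: no semi-directed cycles. -/
def IsCMG : Prop := ¬ G.HasSemiDirCycle

/-- An anterial graph: a chain mixed graph in which no two nodes joined by a bidirected
edge are connected by a semi-directed path. -/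
def IsAnterial : Prop := G.IsCMG ∧ ∀ a b, G.Bidir a b → ¬ G.SemiDirReach a b

/-- The chain component of a node `i`: all nodes connected to `i` by a sequence of
undirected edges (including `i` itself). -/
def ChainComp (i : V) : Set V := {j | Relation.ReflTransGen G.Undir i j}

/-- Chain-connected: `i ↔ j` implies `i ↔ k` for every `k` in the chain component of `j`. -/
def ChainConnected : Prop := ∀ i j k : V, G.Bidir i j → k ∈ G.ChainComp j → G.Bidir i k

/-- The neighbours of a node. -/
def neSet (i : V) : Set V := {x | G.Undir x i}

/-- The parents of a node. -/
def paSet (i : V) : Set V := {x | G.dir x i}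

lemma undir_symmetric : Symmetric G.Undir := fun _ _ h => h.elim Or.inr Or.inl

end MixedGraph

/-- The kind of an edge traversed on a walk, relative to the direction of travel. -/
inductive EdgeKind : Type
  | dirR   -- directed edge pointing forwards
  | dirL   -- directed edge pointing backwards
  | undirE -- undirected edge
  | bidirE -- bidirected edge

/-- Whether an edge of the given kind joins `a` to `b` (in the direction of travel). -/
def MixedGraph.edgeHolds {V : Type u} (G : MixedGraph V) : EdgeKind → V → V → Prop
  | .dirR, a, b => G.dir a b
  | .dirL, a, b => G.dir b a
  | .undirE, a, b => G.Undir a b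
  | .bidirE, a, b => G.Bidir a b

/-- A walk in a mixed graph: a sequence of nodes in which every pair of consecutive nodes
is joined by an edge (nodes and edges may repeat). -/
structure GWalk {V : Type u} (G : MixedGraph V) where
  len : ℕ
  node : ℕ → V
  kind : ℕ → EdgeKind
  valid : ∀ k, k < len → G.edgeHolds (kind k) (node k) (node (k + 1))

namespace GWalk

variable {V : Type u} {G : MixedGraph V} (w : GWalk G)

/-- The nodes with indices in `[a, b]` form a section of the walk: a maximal subwalk
all of whose edges are undirected. -/
def IsSection (a b : ℕ) : Prop :=
  a ≤ b ∧ b ≤ w.len ∧ (∀ k, a ≤ k → k < b → w.kind k = EdgeKind.undirE) ∧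
    (a = 0 ∨ w.kind (a - 1) ≠ EdgeKind.undirE) ∧ (b = w.len ∨ w.kind b ≠ EdgeKind.undirE)

/-- A collider section: the two edges of the walk immediately adjacent to the section
both have an arrowhead at the section. -/
def IsColliderSection (a b : ℕ) : Prop :=
  w.IsSection a b ∧ 0 < a ∧ b < w.len ∧
    (w.kind (a - 1) = EdgeKind.dirR ∨ w.kind (a - 1) = EdgeKind.bidirE) ∧
    (w.kind b = EdgeKind.dirL ∨ w.kind b = EdgeKind.bidirE)

/-- The walk is connecting given `C`: every collider section contains a node of `C` and
every non-collider section contains no node of `C`. -/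
def ConnectingGiven (C : Set V) : Prop :=
  ∀ a b : ℕ, w.IsSection a b →
    (w.IsColliderSection a b → ∃ m, a ≤ m ∧ m ≤ b ∧ w.node m ∈ C) ∧
    (¬ w.IsColliderSection a b → ∀ m, a ≤ m → m ≤ b → w.node m ∉ C)

/-- A semi-directed walk: every edge is undirected or directed forwards. -/
def IsSemiDirected : Prop :=
  ∀ k, k < w.len → (w.kind k = EdgeKind.dirR ∨ w.kind k = EdgeKind.undirE)

end GWalk

/-- Graphical separation: `A ⊥_G B | C` holds if there is no connecting walk given `C`
between a node of `A` and a node of `B`. -/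
def MixedGraph.Sep {V : Type u} (G : MixedGraph V) (A B C : Set V) : Prop :=
  ¬ ∃ w : GWalk G, w.node 0 ∈ A ∧ w.node w.len ∈ B ∧ w.ConnectingGiven C

/-- A primitive inducing path between `i` and `j`. -/
def PrimitiveInducingPath {V : Type u} (G : MixedGraph V) (i j : V) : Prop :=
  ∃ w : GWalk G, 2 ≤ w.len ∧ w.node 0 = i ∧ w.node w.len = j ∧
    (∀ m, 0 < m → m < w.len → w.node m ∈ G.ant {i, j}) ∧
    (∀ k, 1 ≤ k → k + 1 < w.len → (w.kind k = EdgeKind.bidirE ∨ w.kind k = EdgeKind.undirE)) ∧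
    (w.kind 0 = EdgeKind.bidirE ∨ w.kind 0 = EdgeKind.dirR) ∧
    (w.kind (w.len - 1) = EdgeKind.bidirE ∨ w.kind (w.len - 1) = EdgeKind.dirL)

/-- A mixed graph is maximal if every pair of non-adjacent nodes can be separated by some set. -/
def IsMaximal {V : Type u} (G : MixedGraph V) : Prop :=
  ∀ i j : V, i ≠ j → ¬ G.Adj i j → ∃ C : Set V, i ∉ C ∧ j ∉ C ∧ G.Sep {i} {j} C

/-! ## Independence models -/

/-- Pairwise disjointness of three sets. -/
def Disjoint3 {V : Type u} (A B C : Set V) : Prop :=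
  Disjoint A B ∧ Disjoint A C ∧ Disjoint B C

/-- A compositional graphoid: an independence model over `V` satisfying symmetry,
decomposition, weak union, contraction, intersection and composition. -/
structure IsCompositionalGraphoid {V : Type u} (J : Set V → Set V → Set V → Prop) : Prop where
  symm : ∀ A B C : Set V, Disjoint3 A B C → J A B C → J B A C
  decomposition : ∀ A B C D : Set V, Disjoint3 A (B ∪ D) C → J A (B ∪ D) C → J A B C
  weakUnion : ∀ A B C D : Set V, Disjoint3 A (B ∪ D) C → J A (B ∪ D) C → J A B (C ∪ D)
  contraction : ∀ A B C D : Set V, Disjoint3 A B (C ∪ D) → Disjoint3 A D C →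
    J A B (C ∪ D) → J A D C → J A (B ∪ D) C
  intersection : ∀ A B C D : Set V, Disjoint3 A B (C ∪ D) → Disjoint3 A D (C ∪ B) →
    J A B (C ∪ D) → J A D (C ∪ B) → J A (B ∪ D) C
  composition : ∀ A B C D : Set V, Disjoint3 A B C → Disjoint3 A D C →
    J A B C → J A D C → J A (B ∪ D) C

/-- An independence model `J` is Markovian to a mixed graph `G` if every graphical
separation implies the corresponding independence statement. -/
def MarkovTo {V : Type u} (J : Set V → Set V → Set V → Prop) (G : MixedGraph V) : Prop :=
  ∀ A B C : Set V, Disjoint3 A B C → G.Sep A B C → J A B C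

/-! ## The collapsed graph -/

/-- The equivalence relation "being in the same chain component". -/
def MixedGraph.undirSetoid {V : Type*} (G : MixedGraph V) : Setoid V where
  r a b := Relation.ReflTransGen G.Undir a b
  iseqv := ⟨fun _ => Relation.ReflTransGen.refl,
    fun {x y} h => by
      change Relation.ReflTransGen G.Undir x y at h
      change Relation.ReflTransGen G.Undir y x
      induction h with
      | refl => exact Relation.ReflTransGen.refl
      | tail _ hbc ih => exact Relation.ReflTransGen.head (G.undir_symmetric hbc) ih,
    fun h h' => Relation.ReflTransGen.trans h h'⟩

/-- The nodes of the collapsed graph: the chain components of `G`. -/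
def ColNode {V : Type*} (G : MixedGraph V) : Type _ := Quotient G.undirSetoid

/-- The collapsed graph `G_col` of a chain-connected anterial graph `G`: nodes are the
chain components of `G`, with `τ(i) → τ(j)` whenever `i' → j'` in `G` for some
`i' ∈ τ(i)`, `j' ∈ τ(j)`, and `τ(i) ↔ τ(j)` whenever `i' ↔ j'` in `G` for some
`i' ∈ τ(i)`, `j' ∈ τ(j)`; it has no undirected edges. -/
def colGraph {V : Type*} (G : MixedGraph V) : MixedGraph (ColNode G) where
  dir x y := ∃ a b : V, Quotient.mk G.undirSetoid a = x ∧ Quotient.mk G.undirSetoid b = y ∧ G.dir a b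
  undir _ _ := False
  bidir x y := ∃ a b : V, Quotient.mk G.undirSetoid a = x ∧ Quotient.mk G.undirSetoid b = y ∧ G.Bidir a b

/-- Undirected reachability between representatives of equal chain components. -/
lemma col_eq_reach {V : Type*} (G : MixedGraph V) {a b : V}
    (h : Quotient.mk G.undirSetoid a = Quotient.mk G.undirSetoid b) :
    G.SemiDirReach a b := by
  have h' : Relation.ReflTransGen G.Undir a b := Quotient.exact h
  exact Relation.ReflTransGen.mono (fun _ _ hu => Or.inr hu) _ _ h'

/-- Directed reachability in the collapsed graph lifts to semi-directed reachability. -/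
lemma col_reach {V : Type*} (G : MixedGraph V)
    {x y : ColNode G} (h : Relation.ReflTransGen (colGraph G).dir x y) :
    ∀ a b : V, Quotient.mk G.undirSetoid a = x → Quotient.mk G.undirSetoid b = y →
      G.SemiDirReach a b := by
  induction h with
  | refl =>
    intro a b ha hb
    exact col_eq_reach G (ha.trans hb.symm)
  | tail _ hstep ih =>
    intro a b ha hb
    obtain ⟨c, d, hc, hd, hcd⟩ := hstep
    have h1 := ih a c ha hc
    have h2 := col_eq_reach G (hd.trans hb.symm)
    exact (h1.tail (Or.inl hcd)).trans h2

/-! ## Statement 10 -/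

/-- Let `G` be a chain-connected anterial graph and `G_col` its collapsed graph over the
chain components of `G`. Then no pair of distinct chain components is joined in `G_col`
by both a directed and a bidirected edge; `G_col` has no undirected edges; `G_col` has
no directed cycle; and no bidirected edge of `G_col` has its endpoints joined by a
directed path. In particular, `G_col` is an ancestral graph. -/
theorem statement_10 {V : Type*} [Fintype V] (G : MixedGraph V)
    (hant : G.IsAnterial) (hcc : G.ChainConnected) :
    (∀ x y : ColNode G, x ≠ y →
        ¬ (((colGraph G).dir x y ∨ (colGraph G).dir y x) ∧ (colGraph G).Bidir x y)) ∧
    (∀ x y : ColNode G, ¬ (colGraph G).Undir x y) ∧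
    (¬ ∃ x y : ColNode G, (colGraph G).dir x y ∧
        Relation.ReflTransGen (colGraph G).dir y x) ∧
    (∀ x y : ColNode G, (colGraph G).Bidir x y →
        ¬ Relation.ReflTransGen (colGraph G).dir x y) := by
  have key : ∀ x y : ColNode G, (colGraph G).Bidir x y →
      ¬ Relation.ReflTransGen (colGraph G).dir x y := by
    intro x y hbi hreach
    rcases hbi with ⟨a, b, ha, hb, hab⟩ | ⟨a, b, ha, hb, hab⟩
    · exact hant.2 a b hab (col_reach G hreach a b ha hb)
    · exact hant.2 b a (hab.elim Or.inr Or.inl) (col_reach G hreach b a hb ha)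
  refine ⟨?_, fun x y h => h.elim id id, ?_, key⟩
  · intro x y _ ⟨hd, hbi⟩
    rcases hd with hd | hd
    · exact key x y hbi (Relation.ReflTransGen.single hd)
    · exact key y x (hbi.elim Or.inr Or.inl) (Relation.ReflTransGen.single hd)
  · rintro ⟨x, y, ⟨a, b, ha, hb, hab⟩, hreach⟩
    exact hant.1 ⟨a, b, hab, col_reach G hreach b a hb ha⟩
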